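/- For all integers r ≥ 0 and n ≥ 1, S_2^{(r)}(n) = ((2n+r)/(r+2)) · S_1^{(r)}(n), i.e., (r+2) · S_2^{(r)}(n) = (2n+r) · S_1^{(r)}(n) as rational numbers. -/
import Mathlib

/-- Hyper-sum of powers of integers: `S m 0 n = n^m` and
`S m (r+1) n = ∑ i in [1..n], S m r i`. -/
def S (m : ℕ) : ℕ → ℕ → ℚ
  | 0, n => (n : ℚ) ^ m
  | r + 1, n => ∑ i ∈ Finset.Icc 1 n, S m r i

lemma hsum_choose (r : ℕ) : ∀ n : ℕ,
    ∑ i ∈ Finset.Icc 1 n, (i + r).choose (r + 1) = (n + r + 1).choose (r + 2)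
  | 0 => by simp [Nat.choose_eq_zero_of_lt]
  | n + 1 => by
    rw [Finset.sum_Icc_succ_top (by omega), hsum_choose r n]
    have h : (n + 1 + r + 1).choose (r + 2)
        = (n + r + 1).choose (r + 1) + (n + r + 1).choose (r + 2) := by
      have := Nat.choose_succ_succ (n + r + 1) (r + 1)
      simpa [Nat.succ_eq_add_one, show n + 1 + r + 1 = n + r + 1 + 1 from by omega] using this
    rw [h, show n + 1 + r = n + r + 1 from by omega]
    omega

lemma hA (r : ℕ) : ∀ n : ℕ, S 1 r n = ((n + r).choose (r + 1) : ℚ) := by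
  induction r with
  | zero => intro n; simp [S]
  | succ r ih =>
    intro n
    show (∑ i ∈ Finset.Icc 1 n, S 1 r i) = _
    rw [Finset.sum_congr rfl (fun i _ => ih i), ← Nat.cast_sum, hsum_choose r n]
    norm_cast

lemma main_lemma (r : ℕ) : ∀ n : ℕ,
    ((r : ℚ) + 2) * S 2 r n = (2 * (n : ℚ) + r) * S 1 r n := by
  induction r with
  | zero => intro n; simp [S]; ring
  | succ r ih =>
    intro n
    induction n with
    | zero => simp [S]
    | succ n ihn =>
      have eS2 : S 2 (r+1) (n+1) = S 2 (r+1) n + S 2 r (n+1) := by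
        show (∑ i ∈ Finset.Icc 1 (n+1), S 2 r i)
            = (∑ i ∈ Finset.Icc 1 n, S 2 r i) + S 2 r (n+1)
        exact Finset.sum_Icc_succ_top (by omega) _
      have eS1 : S 1 (r+1) (n+1) = S 1 (r+1) n + S 1 r (n+1) := by
        show (∑ i ∈ Finset.Icc 1 (n+1), S 1 r i)
            = (∑ i ∈ Finset.Icc 1 n, S 1 r i) + S 1 r (n+1)
        exact Finset.sum_Icc_succ_top (by omega) _
      have hB := ihn
      have hr := ih (n+1)
      have ha1 : S 1 r (n+1) = ((n + r + 1).choose (r + 1) : ℚ) := by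
        rw [hA r (n+1), show n + 1 + r = n + r + 1 from by omega]
      have hc2 : S 1 (r+1) n = ((n + r + 1).choose (r + 2) : ℚ) := by
        rw [hA (r+1) n]
        norm_cast
      have key : (n : ℚ) * ((n + r + 1).choose (r + 1) : ℚ)
          = ((r : ℚ) + 2) * ((n + r + 1).choose (r + 2) : ℚ) := by
        have h1 := Nat.add_one_mul_choose_eq (n + r) (r + 1)
        have h2 := Nat.choose_mul_succ_eq (n + r) (r + 1)
        rw [show n + r + 1 - (r + 1) = n from by omega] at h2
        have h1' : ((n + r + 1) * (n + r).choose (r + 1) : ℚ)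
            = ((n + r + 1).choose (r + 2) * (r + 2) : ℚ) := by exact_mod_cast h1
        have h2' : ((n + r).choose (r + 1) * (n + r + 1) : ℚ)
            = ((n + r + 1).choose (r + 1) * n : ℚ) := by exact_mod_cast h2
        push_cast at h1' h2' ⊢
        linarith
      rw [eS2, eS1, hc2, ha1]
      rw [hc2] at hB
      rw [ha1] at hr
      push_cast at hB hr key ⊢
      have h2 : ((r:ℚ)+2) ≠ 0 := by positivity
      apply mul_left_cancel₀ h2
      linear_combination ((r:ℚ)+2) * hB + ((r:ℚ)+3) * hr + 2 * key

theorem stmt_1 (r n : ℕ) (hn : 1 ≤ n) :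
    ((r : ℚ) + 2) * S 2 r n = (2 * (n : ℚ) + r) * S 1 r n := main_lemma r n
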